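/- arXiv:math/0503445 — 3 statements merged into one kernel-verified Lean document; each statement's English description precedes it below -/
import Mathlib

section
/- Let τ > 0 and ε > 0, and consider the Ornstein–Uhlenbeck setup with p(x) = (2πτ)^{-1/2} exp(−x²/(2τ)), k_ε(x,y) = (2πε)^{-1/2} exp(−(x−y)²/(2ε)), and p_ε(y) = ∫ k_ε(x,y) p(x) dx. Then the function φ₁(x) = x·exp(−x²/(4(τ+ε))) is an eigenfunction of the symmetric operator T_s with eigenvalue τ/(τ+ε): for every x ∈ ℝ, ∫ [k_ε(x,y)/√(p_ε(x) p_ε(y))] φ₁(y) p(y) dy = (τ/(τ+ε)) φ₁(x). -/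
open MeasureTheory Real

lemma int_exp (a b : ℝ) (ha : 0 < a) :
    ∫ y : ℝ, Real.exp (-a * y ^ 2 + b * y)
      = Real.sqrt (π / a) * Real.exp (b ^ 2 / (4 * a)) := by
  have key : ∀ y : ℝ, -a * y ^ 2 + b * y
      = -a * (y - b / (2 * a)) ^ 2 + b ^ 2 / (4 * a) := by
    intro y; field_simp; ring
  simp_rw [key, Real.exp_add, integral_mul_const]
  rw [integral_sub_right_eq_self (fun y ↦ Real.exp (-a * y ^ 2)) (b / (2 * a)),
    integral_gaussian]

lemma int_mul_exp (a b : ℝ) (ha : 0 < a) :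
    ∫ y : ℝ, y * Real.exp (-a * y ^ 2 + b * y)
      = b / (2 * a) * Real.sqrt (π / a) * Real.exp (b ^ 2 / (4 * a)) := by
  have key : ∀ y : ℝ, y * Real.exp (-a * y ^ 2 + b * y)
      = ((y - b / (2 * a)) + b / (2 * a)) * Real.exp (-a * (y - b / (2 * a)) ^ 2)
          * Real.exp (b ^ 2 / (4 * a)) := by
    intro y
    rw [mul_assoc, ← Real.exp_add]
    congr 1
    · ring
    · congr 1; field_simp; ring
  simp_rw [key, integral_mul_const]
  rw [integral_sub_right_eq_self
    (fun y ↦ (y + b / (2 * a)) * Real.exp (-a * y ^ 2)) (b / (2 * a))]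
  have h0 : ∫ y : ℝ, y * Real.exp (-a * y ^ 2) = 0 := by
    have h := integral_neg_eq_self (fun y : ℝ ↦ y * Real.exp (-a * y ^ 2)) volume
    simp only [neg_sq, neg_mul] at h
    rw [integral_neg] at h
    simp only [neg_mul]
    linarith
  have h1 : Integrable (fun y : ℝ ↦ y * Real.exp (-a * y ^ 2)) :=
    integrable_mul_exp_neg_mul_sq ha
  have h2 : Integrable (fun y : ℝ ↦ Real.exp (-a * y ^ 2)) :=
    integrable_exp_neg_mul_sq ha
  simp_rw [add_mul]
  rw [integral_add h1 (h2.const_mul _), h0, integral_const_mul, integral_gaussian]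
  ring

/-- In the Ornstein–Uhlenbeck setup, `φ₁(x) = x · exp(−x²/(4(τ+ε)))` is an eigenfunction
of the symmetric operator `T_s` with eigenvalue `τ/(τ+ε)`. -/
theorem stmt_6 (τ ε : ℝ) (hτ : 0 < τ) (hε : 0 < ε)
    (p : ℝ → ℝ) (hp : ∀ x, p x = (Real.sqrt (2 * π * τ))⁻¹ * Real.exp (-x ^ 2 / (2 * τ)))
    (k : ℝ → ℝ → ℝ)
    (hk : ∀ x y, k x y = (Real.sqrt (2 * π * ε))⁻¹ * Real.exp (-(x - y) ^ 2 / (2 * ε)))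
    (pe : ℝ → ℝ) (hpe : ∀ y, pe y = ∫ x, k x y * p x)
    (φ₁ : ℝ → ℝ) (hφ₁ : ∀ x, φ₁ x = x * Real.exp (-x ^ 2 / (4 * (τ + ε)))) :
    ∀ x, ∫ y, k x y / Real.sqrt (pe x * pe y) * φ₁ y * p y
      = τ / (τ + ε) * φ₁ x := by
  have hπ : (0:ℝ) < π := Real.pi_pos
  set σ := τ + ε with hσdef
  have hσ : 0 < σ := by positivity
  set u := Real.sqrt (2 * π * ε) with hudef
  set v := Real.sqrt (2 * π * τ) with hvdef
  set w := Real.sqrt (2 * π * σ) with hwdef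
  have hu : 0 < u := Real.sqrt_pos.mpr (by positivity)
  have hv : 0 < v := Real.sqrt_pos.mpr (by positivity)
  have hw : 0 < w := Real.sqrt_pos.mpr (by positivity)
  set A : ℝ := σ / (2 * ε * τ) with hAdef
  have hA : 0 < A := by positivity
  have hsA : Real.sqrt (π / A) = u * v / w := by
    rw [hudef, hvdef, hwdef, ← Real.sqrt_mul (by positivity), ← Real.sqrt_div (by positivity)]
    congr 1
    rw [hAdef]
    field_simp
  -- closed form of pe
  have hpe' : ∀ y, pe y = w⁻¹ * Real.exp (-y ^ 2 / (2 * σ)) := by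
    intro y
    have hptw : ∀ z : ℝ, k z y * p z
        = (u⁻¹ * v⁻¹ * Real.exp (-y ^ 2 / (2 * ε))) * Real.exp (-A * z ^ 2 + (y / ε) * z) := by
      intro z
      rw [hk, hp]
      have harg : -(z - y) ^ 2 / (2 * ε) + -z ^ 2 / (2 * τ)
          = -y ^ 2 / (2 * ε) + (-A * z ^ 2 + (y / ε) * z) := by
        rw [hAdef, hσdef]; field_simp; ring
      calc u⁻¹ * Real.exp (-(z - y) ^ 2 / (2 * ε)) * (v⁻¹ * Real.exp (-z ^ 2 / (2 * τ)))
          = u⁻¹ * v⁻¹ * (Real.exp (-(z - y) ^ 2 / (2 * ε)) * Real.exp (-z ^ 2 / (2 * τ))) := by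
            ring
        _ = u⁻¹ * v⁻¹ * (Real.exp (-y ^ 2 / (2 * ε)) * Real.exp (-A * z ^ 2 + (y / ε) * z)) := by
            rw [← Real.exp_add, harg, Real.exp_add]
        _ = _ := by ring
    rw [hpe y]
    simp_rw [hptw]
    rw [integral_const_mul, int_exp A (y / ε) hA, hsA]
    have harg2 : -y ^ 2 / (2 * ε) + (y / ε) ^ 2 / (4 * A) = -y ^ 2 / (2 * σ) := by
      rw [hAdef, hσdef]; field_simp; ring
    calc u⁻¹ * v⁻¹ * Real.exp (-y ^ 2 / (2 * ε))
          * (u * v / w * Real.exp ((y / ε) ^ 2 / (4 * A)))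
        = (u⁻¹ * v⁻¹ * (u * v / w))
            * (Real.exp (-y ^ 2 / (2 * ε)) * Real.exp ((y / ε) ^ 2 / (4 * A))) := by ring
      _ = w⁻¹ * Real.exp (-y ^ 2 / (2 * σ)) := by
          rw [← Real.exp_add, harg2]
          congr 1
          field_simp
  intro x
  -- sqrt of product
  have hsq : ∀ y : ℝ, Real.sqrt (pe x * pe y)
      = w⁻¹ * Real.exp (-(x ^ 2 + y ^ 2) / (4 * σ)) := by
    intro y
    rw [hpe' x, hpe' y]
    have harg : -x ^ 2 / (2 * σ) + -y ^ 2 / (2 * σ)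
        = -(x ^ 2 + y ^ 2) / (4 * σ) + -(x ^ 2 + y ^ 2) / (4 * σ) := by
      field_simp; ring
    have : w⁻¹ * Real.exp (-x ^ 2 / (2 * σ)) * (w⁻¹ * Real.exp (-y ^ 2 / (2 * σ)))
        = (w⁻¹ * Real.exp (-(x ^ 2 + y ^ 2) / (4 * σ))) ^ 2 := by
      rw [mul_pow, sq (Real.exp _), ← Real.exp_add, ← harg, Real.exp_add, sq]
      ring
    rw [this, Real.sqrt_sq (by positivity)]
  set K : ℝ := u⁻¹ * v⁻¹ * w * Real.exp (x ^ 2 / (4 * σ) - x ^ 2 / (2 * ε)) with hKdef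
  have hptw : ∀ y : ℝ, k x y / Real.sqrt (pe x * pe y) * φ₁ y * p y
      = K * (y * Real.exp (-A * y ^ 2 + (x / ε) * y)) := by
    intro y
    rw [hk, hp, hφ₁, hsq y, div_eq_mul_inv, mul_inv, inv_inv, ← Real.exp_neg]
    have harg : -(x - y) ^ 2 / (2 * ε) + -(-(x ^ 2 + y ^ 2) / (4 * σ))
        + -y ^ 2 / (4 * σ) + -y ^ 2 / (2 * τ)
        = (x ^ 2 / (4 * σ) - x ^ 2 / (2 * ε)) + (-A * y ^ 2 + (x / ε) * y) := by
      rw [hAdef, hσdef]; field_simp; ring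
    calc u⁻¹ * Real.exp (-(x - y) ^ 2 / (2 * ε))
          * (w * Real.exp (-(-(x ^ 2 + y ^ 2) / (4 * σ))))
          * (y * Real.exp (-y ^ 2 / (4 * σ)))
          * (v⁻¹ * Real.exp (-y ^ 2 / (2 * τ)))
        = u⁻¹ * v⁻¹ * w * y
            * (Real.exp (-(x - y) ^ 2 / (2 * ε)) * Real.exp (-(-(x ^ 2 + y ^ 2) / (4 * σ)))
              * Real.exp (-y ^ 2 / (4 * σ)) * Real.exp (-y ^ 2 / (2 * τ))) := by ring
      _ = u⁻¹ * v⁻¹ * w * y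
            * Real.exp (-(x - y) ^ 2 / (2 * ε) + -(-(x ^ 2 + y ^ 2) / (4 * σ))
              + -y ^ 2 / (4 * σ) + -y ^ 2 / (2 * τ)) := by
          rw [← Real.exp_add, ← Real.exp_add, ← Real.exp_add]
      _ = K * (y * Real.exp (-A * y ^ 2 + (x / ε) * y)) := by
          rw [harg, Real.exp_add, hKdef]; ring
  simp_rw [hptw]
  rw [integral_const_mul, int_mul_exp A (x / ε) hA, hsA, hφ₁, hKdef]
  have harg : (x ^ 2 / (4 * σ) - x ^ 2 / (2 * ε)) + (x / ε) ^ 2 / (4 * A)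
      = -x ^ 2 / (4 * σ) := by
    rw [hAdef]; field_simp; ring
  have hB : x / ε / (2 * A) = τ / σ * x := by
    rw [hAdef]; field_simp
  calc u⁻¹ * v⁻¹ * w * Real.exp (x ^ 2 / (4 * σ) - x ^ 2 / (2 * ε))
        * (x / ε / (2 * A) * (u * v / w) * Real.exp ((x / ε) ^ 2 / (4 * A)))
      = (u⁻¹ * v⁻¹ * w * (u * v / w)) * (x / ε / (2 * A))
          * (Real.exp (x ^ 2 / (4 * σ) - x ^ 2 / (2 * ε))
            * Real.exp ((x / ε) ^ 2 / (4 * A))) := by ring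
    _ = τ / σ * (x * Real.exp (-x ^ 2 / (4 * σ))) := by
        rw [← Real.exp_add, harg, hB]
        have : u⁻¹ * v⁻¹ * w * (u * v / w) = 1 := by field_simp
        rw [this]; ring
end

section
/- (Paper's Lemma.) Let τ > 0 and ε > 0, and consider the Ornstein–Uhlenbeck setup with p(x) = (2πτ)^{-1/2} exp(−x²/(2τ)), k_ε(x,y) = (2πε)^{-1/2} exp(−(x−y)²/(2ε)), p_ε(y) = ∫ k_ε(x,y) p(x) dx, and symmetric operator T_s φ(x) = ∫ [k_ε(x,y)/√(p_ε(x) p_ε(y))] φ(y) p(y) dy. Then for every natural number m there exists a real polynomial q_m of degree exactly m such that the function φ_m(x) = q_m(x)·exp(−x²/(4(τ+ε))) satisfies T_s φ_m = (τ/(τ+ε))^m φ_m, i.e., for every x ∈ ℝ, ∫ [k_ε(x,y)/√(p_ε(x) p_ε(y))] φ_m(y) p(y) dy = (τ/(τ+ε))^m φ_m(x). -/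
open MeasureTheory Real Polynomial Finset

lemma my_gauss_translate {a : ℝ} (ha : 0 < a) (c : ℝ) :
    ∫ y : ℝ, Real.exp (-(a * (y - c) ^ 2)) = Real.sqrt (π / a) := by
  have h := integral_sub_right_eq_self (μ := volume) (fun y : ℝ => Real.exp (-(a * y ^ 2))) c
  rw [h, ← integral_gaussian a]
  simp [neg_mul]

lemma my_integrable_pow (a : ℝ) (ha : 0 < a) (n : ℕ) :
    Integrable (fun z : ℝ => z ^ n * Real.exp (-(a * z ^ 2))) := by
  have h := integrable_rpow_mul_exp_neg_mul_sq ha (s := (n : ℝ))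
    (by exact lt_of_lt_of_le neg_one_lt_zero (Nat.cast_nonneg n))
  simpa [Real.rpow_natCast, neg_mul] using h

lemma my_poly_gauss {a : ℝ} (ha : 0 < a) (N : ℕ) (q : Polynomial ℝ) (hq : q.natDegree ≤ N)
    (c : ℝ) :
    ∫ y : ℝ, q.eval y * Real.exp (-(a * (y - c) ^ 2))
      = ∑ j ∈ Finset.range (N + 1),
          (Polynomial.hasseDeriv j q).eval c * ∫ z : ℝ, z ^ j * Real.exp (-(a * z ^ 2)) := by
  have h0 : ∫ y : ℝ, q.eval y * Real.exp (-(a * (y - c) ^ 2))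
      = ∫ z : ℝ, q.eval (z + c) * Real.exp (-(a * z ^ 2)) := by
    have h := integral_sub_right_eq_self (μ := volume)
      (fun z : ℝ => q.eval (z + c) * Real.exp (-(a * z ^ 2))) c
    rw [← h]
    congr 1; funext y; simp [sub_add_cancel]
  rw [h0]
  have h1 : ∀ z : ℝ, q.eval (z + c) = ∑ j ∈ Finset.range (N + 1),
      (Polynomial.hasseDeriv j q).eval c * z ^ j := by
    intro z
    have := Polynomial.eval_eq_sum_range' (p := Polynomial.taylor c q) (n := N + 1)
      (by rw [Polynomial.natDegree_taylor]; omega) z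
    rw [← Polynomial.taylor_eval c q z, this]
    exact Finset.sum_congr rfl fun j _ => by rw [Polynomial.taylor_coeff]
  calc ∫ z : ℝ, q.eval (z + c) * Real.exp (-(a * z ^ 2))
      = ∫ z : ℝ, ∑ j ∈ Finset.range (N + 1),
          (Polynomial.hasseDeriv j q).eval c * (z ^ j * Real.exp (-(a * z ^ 2))) := by
        congr 1; funext z; rw [h1 z, Finset.sum_mul]
        exact Finset.sum_congr rfl fun j _ => by ring
    _ = ∑ j ∈ Finset.range (N + 1),
          (Polynomial.hasseDeriv j q).eval c * ∫ z : ℝ, z ^ j * Real.exp (-(a * z ^ 2)) := by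
        rw [integral_finset_sum]
        · exact Finset.sum_congr rfl fun j _ => integral_const_mul _ _
        · exact fun j _ => (my_integrable_pow a ha j).const_mul _

lemma my_coeff_comp (p : Polynomial ℝ) (r : ℝ) (i : ℕ) :
    (p.comp (Polynomial.C r * Polynomial.X)).coeff i = r ^ i * p.coeff i := by
  induction p using Polynomial.induction_on' with
  | add p q hp hq => simp [Polynomial.add_comp, hp, hq, mul_add]
  | monomial n b =>
    simp only [Polynomial.monomial_comp, mul_pow, ← Polynomial.C_pow,
      Polynomial.coeff_monomial]
    rw [← mul_assoc, ← Polynomial.C_mul, Polynomial.coeff_C_mul, Polynomial.coeff_X_pow]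
    by_cases h : n = i
    · simp [h, mul_comm]
    · have h2 : ¬ i = n := fun hi => h hi.symm
      simp [h, h2]

lemma my_exp_comb (c1 c2 c4 E1 E2 E3 E4 Q : ℝ) :
    (c1 * Real.exp E1) / (c2 * Real.exp E2) * (Q * Real.exp E3) * (c4 * Real.exp E4)
      = (c1 / c2 * c4) * Q * Real.exp (E1 - E2 + E3 + E4) := by
  have h2 : Real.exp E2 ≠ 0 := (Real.exp_pos E2).ne'
  rw [Real.exp_add, Real.exp_add, Real.exp_sub]
  by_cases hc2 : c2 = 0
  · simp [hc2]
  · field_simp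

lemma my_cancel {c1 c2 : ℝ} (c3 E : ℝ) (h1 : c1 ≠ 0) (h2 : c2 ≠ 0) :
    c1⁻¹ * c2⁻¹ * E * (c1 * c2 / c3) = c3⁻¹ * E := by
  rcases eq_or_ne c3 0 with h | h
  · simp [h]
  · field_simp

lemma my_cancel2 (c1 c2 c3 : ℝ) : c1⁻¹ / c3⁻¹ * c2⁻¹ = (c1 * c2 / c3)⁻¹ := by
  simp only [div_eq_mul_inv, mul_inv, inv_inv]
  ring

/-- (Paper's Lemma.) In the Ornstein–Uhlenbeck setup, for every natural number `m` there
is a real polynomial `q_m` of degree exactly `m` such that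
`φ_m(x) = q_m(x) · exp(−x²/(4(τ+ε)))` is an eigenfunction of the symmetric operator `T_s`
with eigenvalue `(τ/(τ+ε))^m`. -/
theorem stmt_7 (τ ε : ℝ) (hτ : 0 < τ) (hε : 0 < ε)
    (p : ℝ → ℝ) (hp : ∀ x, p x = (Real.sqrt (2 * π * τ))⁻¹ * Real.exp (-x ^ 2 / (2 * τ)))
    (k : ℝ → ℝ → ℝ)
    (hk : ∀ x y, k x y = (Real.sqrt (2 * π * ε))⁻¹ * Real.exp (-(x - y) ^ 2 / (2 * ε)))
    (pe : ℝ → ℝ) (hpe : ∀ y, pe y = ∫ x, k x y * p x) :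
    ∀ m : ℕ, ∃ q : Polynomial ℝ, q.degree = (m : ℕ) ∧
      ∀ x, ∫ y, k x y / Real.sqrt (pe x * pe y) *
            (q.eval y * Real.exp (-y ^ 2 / (4 * (τ + ε)))) * p y
        = (τ / (τ + ε)) ^ m * (q.eval x * Real.exp (-x ^ 2 / (4 * (τ + ε)))) := by
  intro m
  have hπ : (0:ℝ) < π := Real.pi_pos
  set s : ℝ := τ + ε with hsdef
  have hs0 : (0:ℝ) < s := by rw [hsdef]; positivity
  set a : ℝ := s / (2 * ε * τ) with hadef
  have ha : 0 < a := by rw [hadef]; positivity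
  set r : ℝ := τ / s with hrdef
  have hr0 : 0 < r := by rw [hrdef]; positivity
  have hr1 : r < 1 := by
    rw [hrdef, div_lt_one hs0, hsdef]; linarith
  have hg0 : (0:ℝ) < Real.sqrt (π / a) := Real.sqrt_pos.2 (by positivity)
  set g : ℝ := Real.sqrt (π / a) with hgdef
  have hgne : g ≠ 0 := ne_of_gt hg0
  set M : ℕ → ℝ := fun j => ∫ z : ℝ, z ^ j * Real.exp (-(a * z ^ 2)) with hM
  have hMj : ∀ j, (∫ z : ℝ, z ^ j * Real.exp (-(a * z ^ 2))) = M j := fun j => by rw [hM]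
  have hM0 : M 0 = g := by
    rw [hM, hgdef]
    simpa using my_gauss_translate ha 0
  set B : Polynomial ℝ → Polynomial ℝ :=
    fun q => ∑ j ∈ Finset.range (m + 1), (M j / g) • Polynomial.hasseDeriv j q with hB
  set A : Polynomial ℝ → Polynomial ℝ :=
    fun q => (B q).comp (Polynomial.C r * Polynomial.X) with hA
  -- coefficient facts
  have hBcoeff : ∀ (q : Polynomial ℝ) (i : ℕ), q.natDegree ≤ i → (B q).coeff i = q.coeff i := by
    intro q i hi
    rw [hB]
    simp only
    rw [Polynomial.finset_sum_coeff]
    rw [Finset.sum_eq_single 0]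
    · simp [Polynomial.coeff_smul, hM0, smul_eq_mul, div_self hgne]
    · intro j hj hj0
      rw [Polynomial.coeff_smul, Polynomial.hasseDeriv_coeff, smul_eq_mul,
        q.coeff_eq_zero_of_natDegree_lt (by omega)]
      ring
    · intro h
      exact absurd (Finset.mem_range.2 (Nat.succ_pos m)) h
  have hAcoeff : ∀ q i, (A q).coeff i = r ^ i * (B q).coeff i := by
    intro q i; rw [hA]; exact my_coeff_comp (B q) r i
  have hAadd : ∀ q1 q2, A (q1 + q2) = A q1 + A q2 := by
    intro q1 q2
    have hb : B (q1 + q2) = B q1 + B q2 := by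
      rw [hB]; simp only [map_add, smul_add, Finset.sum_add_distrib]
    rw [hA]; simp only [hb, Polynomial.add_comp]
  have hAsmul : ∀ (c : ℝ) q, A (c • q) = c • A q := by
    intro c q
    have hb : B (c • q) = c • B q := by
      rw [hB]; simp only
      rw [Finset.smul_sum]
      refine Finset.sum_congr rfl fun j _ => ?_
      rw [_root_.map_smul]
      exact smul_comm _ _ _
    rw [hA]; simp only [hb, Polynomial.smul_comp]
  have hA0 : A 0 = 0 := by
    have hb : B 0 = 0 := by rw [hB]; simp
    rw [hA]; simp only [hb, Polynomial.zero_comp]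
  -- eigenvector construction
  have key : ∀ n : ℕ, ∃ q : Polynomial ℝ, q.degree = (n : ℕ) ∧ A q = r ^ n • q := by
    intro n
    induction n using Nat.strong_induction_on with
    | _ n IH =>
      have solve : ∀ kk : ℕ, kk ≤ n → ∀ t : Polynomial ℝ, t.degree < (kk : ℕ) →
          ∃ u : Polynomial ℝ, u.degree < (kk : ℕ) ∧ r ^ n • u - A u = t := by
        intro kk
        induction kk with
        | zero =>
          intro _ t ht
          have hbot : t.degree = ⊥ := by
            have : t.degree < (0 : ℕ) := ht
            simpa [Nat.WithBot.lt_zero_iff] using this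
          have ht0 : t = 0 := Polynomial.degree_eq_bot.mp hbot
          refine ⟨0, ?_, ?_⟩
          · simpa [Polynomial.degree_zero] using (WithBot.bot_lt_coe 0)
          · simp [hA0, ht0]
        | succ kk ihk =>
          intro hkn t ht
          obtain ⟨qk, hqkdeg, hqkeig⟩ := IH kk (by omega)
          have hqknat : qk.natDegree = kk := Polynomial.natDegree_eq_of_degree_eq_some hqkdeg
          have hqk0 : qk ≠ 0 := fun h => by simp [h] at hqkdeg
          have hlc : qk.coeff kk ≠ 0 := by
            rw [← hqknat]
            exact Polynomial.leadingCoeff_ne_zero.mpr hqk0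
          have hrnk : r ^ n - r ^ kk ≠ 0 := by
            have : r ^ n < r ^ kk := pow_lt_pow_right_of_lt_one₀ hr0 hr1 (by omega)
            exact sub_ne_zero.mpr (ne_of_lt this)
          set d : ℝ := t.coeff kk / ((r ^ n - r ^ kk) * qk.coeff kk) with hd
          set t' : Polynomial ℝ := t - ((r ^ n - r ^ kk) * d) • qk with ht'def
          have ht'deg : t'.degree < (kk : ℕ) := by
            rw [Polynomial.degree_lt_iff_coeff_zero]
            intro i hik
            rw [ht'def, Polynomial.coeff_sub, Polynomial.coeff_smul, smul_eq_mul]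
            rcases eq_or_lt_of_le hik with h | h
            · rw [← h, hd]
              field_simp
              ring
            · rw [Polynomial.coeff_eq_zero_of_degree_lt
                  (lt_of_lt_of_le ht (by exact_mod_cast h)),
                Polynomial.coeff_eq_zero_of_degree_lt (by rw [hqkdeg]; exact_mod_cast h)]
              ring
          obtain ⟨u', hu'deg, hu'⟩ := ihk (by omega) t' ht'deg
          refine ⟨u' + d • qk, ?_, ?_⟩
          · apply lt_of_le_of_lt (Polynomial.degree_add_le _ _)
            apply max_lt
            · exact lt_trans hu'deg (by exact_mod_cast Nat.lt_succ_self kk)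
            · apply lt_of_le_of_lt (Polynomial.degree_smul_le _ _)
              rw [hqkdeg]; exact_mod_cast Nat.lt_succ_self kk
          · rw [hAadd, hAsmul, hqkeig]
            have expand : r ^ n • (u' + d • qk) - (A u' + d • (r ^ kk • qk))
                = (r ^ n • u' - A u') + ((r ^ n - r ^ kk) * d) • qk := by
              module
            rw [expand, hu', ht'def]
            abel
      -- main step of strong induction
      set t0 : Polynomial ℝ :=
        A (Polynomial.X ^ n) - r ^ n • (Polynomial.X ^ n) with ht0def
      have ht0deg : t0.degree < (n : ℕ) := by
        rw [Polynomial.degree_lt_iff_coeff_zero]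
        intro i hi
        rw [ht0def, Polynomial.coeff_sub, hAcoeff,
          hBcoeff _ i (by rw [Polynomial.natDegree_X_pow]; exact hi),
          Polynomial.coeff_smul, smul_eq_mul, Polynomial.coeff_X_pow]
        by_cases h : i = n
        · subst h; simp
        · simp [h]
      obtain ⟨u, hudeg, hu⟩ := solve n le_rfl t0 ht0deg
      refine ⟨Polynomial.X ^ n + u, ?_, ?_⟩
      · rw [Polynomial.degree_add_eq_left_of_degree_lt
          (by rw [Polynomial.degree_X_pow]; exact hudeg), Polynomial.degree_X_pow]
      · have hAu : A u = r ^ n • u - t0 := by rw [← hu]; abel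
        rw [hAadd, hAu, ht0def, smul_add]
        abel
  -- use the eigenpolynomial of degree m
  obtain ⟨q, hqdeg, hqeig⟩ := key m
  have hqnat : q.natDegree ≤ m := le_of_eq (Polynomial.natDegree_eq_of_degree_eq_some hqdeg)
  -- constants identity
  have hc : Real.sqrt (π / a) * Real.sqrt (2 * π * s)
      = Real.sqrt (2 * π * ε) * Real.sqrt (2 * π * τ) := by
    rw [← Real.sqrt_mul (by positivity), ← Real.sqrt_mul (by positivity)]
    congr 1
    rw [hadef]
    field_simp
  have hsε : Real.sqrt (2 * π * ε) ≠ 0 := by positivity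
  have hsτ : Real.sqrt (2 * π * τ) ≠ 0 := by positivity
  have hss : Real.sqrt (2 * π * s) ≠ 0 := by positivity
  -- closed form of pe
  have hpe' : ∀ y : ℝ, pe y = (Real.sqrt (2 * π * s))⁻¹ * Real.exp (-(y ^ 2 / (2 * s))) := by
    intro y
    rw [hpe y]
    have hpt : ∀ x : ℝ, k x y * p x
        = ((Real.sqrt (2 * π * ε))⁻¹ * (Real.sqrt (2 * π * τ))⁻¹ * Real.exp (-(y ^ 2 / (2 * s))))
            * Real.exp (-(a * (x - r * y) ^ 2)) := by
      intro x
      rw [hk, hp]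
      rw [mul_mul_mul_comm, ← Real.exp_add, mul_assoc ((Real.sqrt (2 * π * ε))⁻¹ * (Real.sqrt (2 * π * τ))⁻¹),
        ← Real.exp_add]
      congr 1
      rw [hadef, hrdef, hsdef]
      congr 1
      field_simp
      ring
    simp only [hpt]
    rw [integral_const_mul, my_gauss_translate ha (r * y), ← hgdef]
    have hg' : g = Real.sqrt (2 * π * ε) * Real.sqrt (2 * π * τ) / Real.sqrt (2 * π * s) := by
      rw [eq_div_iff hss, hgdef]; exact hc
    rw [hg']
    exact my_cancel _ _ hsε hsτ
  refine ⟨q, hqdeg, fun x => ?_⟩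
  -- square root of the product
  have hsqrt : ∀ y : ℝ, Real.sqrt (pe x * pe y)
      = (Real.sqrt (2 * π * s))⁻¹ * Real.exp (-((x ^ 2 + y ^ 2) / (4 * s))) := by
    intro y
    have hsq2 : ∀ c E1 E2 F : ℝ, E1 + E2 = F + F →
        (c * Real.exp E1) * (c * Real.exp E2) = (c * Real.exp F) ^ 2 := by
      intro c E1 E2 F h
      calc c * Real.exp E1 * (c * Real.exp E2) = (c * c) * (Real.exp E1 * Real.exp E2) := by ring
        _ = (c * c) * Real.exp (E1 + E2) := by rw [← Real.exp_add]
        _ = (c * c) * (Real.exp F * Real.exp F) := by rw [h, Real.exp_add]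
        _ = (c * Real.exp F) ^ 2 := by ring
    rw [hpe' x, hpe' y, hsq2 ((Real.sqrt (2 * π * s))⁻¹) _ _ (-((x ^ 2 + y ^ 2) / (4 * s)))
      (by field_simp [hs0.ne']; ring)]
    exact Real.sqrt_sq (by positivity)
  -- pointwise identity of the integrand
  have hpoint : ∀ y : ℝ, k x y / Real.sqrt (pe x * pe y) *
        (q.eval y * Real.exp (-y ^ 2 / (4 * s))) * p y
      = (Real.exp (-x ^ 2 / (4 * s)) * g⁻¹) *
          (q.eval y * Real.exp (-(a * (y - r * x) ^ 2))) := by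
    intro y
    rw [hk, hsqrt y, hp, my_exp_comb]
    have hcst : (Real.sqrt (2 * π * ε))⁻¹ / (Real.sqrt (2 * π * s))⁻¹
        * (Real.sqrt (2 * π * τ))⁻¹ = g⁻¹ := by
      have hg' : g = Real.sqrt (2 * π * ε) * Real.sqrt (2 * π * τ) / Real.sqrt (2 * π * s) := by
        rw [eq_div_iff hss, hgdef]; exact hc
      rw [my_cancel2, hg']
    rw [hcst]
    have hexp : -(x - y) ^ 2 / (2 * ε) - (-((x ^ 2 + y ^ 2) / (4 * s)))
        + (-y ^ 2 / (4 * s)) + (-y ^ 2 / (2 * τ))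
        = (-x ^ 2 / (4 * s)) + (-(a * (y - r * x) ^ 2)) := by
      rw [hadef, hrdef, hsdef]
      field_simp
      ring
    rw [hexp, Real.exp_add]
    ring
  -- compute the integral
  simp only [hpoint]
  rw [integral_const_mul, my_poly_gauss ha m q hqnat (r * x)]
  simp only [hMj]
  have hBeval : ∀ z : ℝ, (B q).eval z
      = ∑ j ∈ Finset.range (m + 1), (M j / g) * (Polynomial.hasseDeriv j q).eval z := by
    intro z
    rw [hB]
    simp only
    rw [Polynomial.eval_finset_sum]
    exact Finset.sum_congr rfl fun j _ => by rw [Polynomial.eval_smul, smul_eq_mul]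
  have hsum : ∑ j ∈ Finset.range (m + 1), (Polynomial.hasseDeriv j q).eval (r * x) * M j
      = g * (B q).eval (r * x) := by
    rw [hBeval, Finset.mul_sum]
    refine Finset.sum_congr rfl fun j _ => ?_
    field_simp
  rw [hsum]
  have hAeval : (A q).eval x = (B q).eval (r * x) := by
    rw [hA]; simp [Polynomial.eval_comp]
  have hfin : (B q).eval (r * x) = r ^ m * q.eval x := by
    rw [← hAeval, hqeig]
    simp [smul_eq_mul]
  rw [hfin]
  field_simp
end

section
/- Let τ > 0 and ε > 0, and set c = τ(τ+ε)/(2τ+ε). Then the function ψ₂(x) = x² − c is an eigenfunction of the backward operator T_b of the Ornstein–Uhlenbeck setup with eigenvalue (τ/(τ+ε))²: for every x ∈ ℝ, [∫_ℝ k_ε(x,y) (y² − c) p(y) dy] / p_ε(x) = (τ/(τ+ε))² (x² − c). -/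
open MeasureTheory Real

private lemma int2 {a : ℝ} (ha : 0 < a) :
    Integrable (fun z : ℝ => z ^ 2 * Real.exp (-a * z ^ 2)) := by
  have h := integrable_rpow_mul_exp_neg_mul_sq ha (by norm_num : (-1 : ℝ) < 2)
  refine h.congr (ae_of_all _ fun z => ?_)
  have : z ^ (2 : ℝ) = z ^ (2 : ℕ) := by
    rw [← Real.rpow_natCast z 2]; norm_num
  simp only [this]

private lemma gauss1 (a : ℝ) : ∫ z : ℝ, z * Real.exp (-a * z ^ 2) = 0 := by
  have h := MeasureTheory.integral_neg_eq_self (fun z : ℝ => z * Real.exp (-a * z ^ 2))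
    (volume : Measure ℝ)
  simp only [neg_sq] at h
  have h2 : ∫ z : ℝ, -z * Real.exp (-a * z ^ 2)
      = -∫ z : ℝ, z * Real.exp (-a * z ^ 2) := by
    rw [← integral_neg]; congr 1; funext z; ring
  rw [h2] at h
  linarith

private lemma gauss2 {a : ℝ} (ha : 0 < a) :
    ∫ z : ℝ, z ^ 2 * Real.exp (-a * z ^ 2) = Real.sqrt (π / a) / (2 * a) := by
  have hu : ∀ z : ℝ, HasDerivAt (fun z : ℝ => z) 1 z := fun z => hasDerivAt_id z
  have hv : ∀ z : ℝ, HasDerivAt (fun z : ℝ => Real.exp (-a * z ^ 2))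
      (Real.exp (-a * z ^ 2) * (-(2 * a) * z)) z := by
    intro z
    have h1 : HasDerivAt (fun z : ℝ => -a * z ^ 2) (-(2 * a) * z) z := by
      have := (hasDerivAt_pow 2 z).const_mul (-a)
      simpa using this.congr_deriv (by ring)
    exact h1.exp
  have hI0 : Integrable (fun z : ℝ => Real.exp (-a * z ^ 2)) := integrable_exp_neg_mul_sq ha
  have hI1 : Integrable (fun z : ℝ => z * Real.exp (-a * z ^ 2)) :=
    integrable_mul_exp_neg_mul_sq ha
  have hI2 : Integrable (fun z : ℝ => z ^ 2 * Real.exp (-a * z ^ 2)) := int2 ha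
  have huv' : Integrable ((fun z : ℝ => z) * fun z => Real.exp (-a * z ^ 2) * (-(2 * a) * z)) := by
    refine (hI2.const_mul (-(2 * a))).congr (ae_of_all _ fun z => ?_)
    simp only [Pi.mul_apply]; ring
  have hu'v : Integrable ((fun _ : ℝ => (1 : ℝ)) * fun z => Real.exp (-a * z ^ 2)) := by
    refine hI0.congr (ae_of_all _ fun z => ?_)
    simp only [Pi.mul_apply]; ring
  have huv : Integrable ((fun z : ℝ => z) * fun z => Real.exp (-a * z ^ 2)) := by
    refine hI1.congr (ae_of_all _ fun z => ?_)
    simp only [Pi.mul_apply]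
  have key := integral_mul_deriv_eq_deriv_mul_of_integrable (fun z _ => hu z) (fun z _ => hv z) huv' hu'v huv
  have hL : ∫ z : ℝ, z * (Real.exp (-a * z ^ 2) * (-(2 * a) * z))
      = (-(2 * a)) * ∫ z : ℝ, z ^ 2 * Real.exp (-a * z ^ 2) := by
    rw [← integral_const_mul]; congr 1; funext z; ring
  have hR : -∫ z : ℝ, (1 : ℝ) * Real.exp (-a * z ^ 2) = -Real.sqrt (π / a) := by
    simp only [one_mul]
    rw [integral_gaussian a]
  rw [hL, hR] at key
  have h2a : (2 * a) ≠ 0 := by positivity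
  field_simp at key ⊢
  linarith

private lemma gauss_shift0 {a : ℝ} (m : ℝ) (_ : 0 < a) :
    ∫ y : ℝ, Real.exp (-a * (y - m) ^ 2) = Real.sqrt (π / a) := by
  rw [MeasureTheory.integral_sub_right_eq_self (fun z : ℝ => Real.exp (-a * z ^ 2)) m]
  exact integral_gaussian a

private lemma gauss_shift2 {a : ℝ} (m c : ℝ) (ha : 0 < a) :
    ∫ y : ℝ, (y ^ 2 - c) * Real.exp (-a * (y - m) ^ 2)
      = (m ^ 2 + 1 / (2 * a) - c) * Real.sqrt (π / a) := by
  have hI0 : Integrable (fun z : ℝ => Real.exp (-a * z ^ 2)) := integrable_exp_neg_mul_sq ha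
  have hI1 : Integrable (fun z : ℝ => z * Real.exp (-a * z ^ 2)) :=
    integrable_mul_exp_neg_mul_sq ha
  have hI2 : Integrable (fun z : ℝ => z ^ 2 * Real.exp (-a * z ^ 2)) := int2 ha
  have step : ∫ y : ℝ, (y ^ 2 - c) * Real.exp (-a * (y - m) ^ 2)
      = ∫ z : ℝ, ((z + m) ^ 2 - c) * Real.exp (-a * z ^ 2) := by
    rw [← MeasureTheory.integral_sub_right_eq_self
      (fun z : ℝ => ((z + m) ^ 2 - c) * Real.exp (-a * z ^ 2)) m]
    congr 1; funext y; ring_nf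
  rw [step]
  have expand : (fun z : ℝ => ((z + m) ^ 2 - c) * Real.exp (-a * z ^ 2))
      = fun z : ℝ => z ^ 2 * Real.exp (-a * z ^ 2)
        + ((2 * m) * (z * Real.exp (-a * z ^ 2))
          + (m ^ 2 - c) * Real.exp (-a * z ^ 2)) := by
    funext z; ring
  have h1 : Integrable (fun z : ℝ => (2 * m) * (z * Real.exp (-a * z ^ 2))) :=
    hI1.const_mul (2 * m)
  have h2 : Integrable (fun z : ℝ => (m ^ 2 - c) * Real.exp (-a * z ^ 2)) :=
    hI0.const_mul (m ^ 2 - c)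
  have hsum : Integrable (fun z : ℝ => (2 * m) * (z * Real.exp (-a * z ^ 2))
      + (m ^ 2 - c) * Real.exp (-a * z ^ 2)) := h1.add h2
  rw [expand, integral_add hI2 hsum, integral_add h1 h2,
    integral_const_mul, integral_const_mul, gauss2 ha, gauss1 a, integral_gaussian a]
  field_simp
  ring

/-- With `c = τ(τ+ε)/(2τ+ε)`, the function `ψ₂(x) = x² − c` is an eigenfunction of the
Ornstein–Uhlenbeck backward operator `T_b ψ (x) = (∫ k_ε x y * ψ y * p y dy) / p_ε x`
with eigenvalue `(τ/(τ+ε))²`. -/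
theorem stmt_9 (τ ε : ℝ) (hτ : 0 < τ) (hε : 0 < ε)
    (c : ℝ) (hc : c = τ * (τ + ε) / (2 * τ + ε))
    (p : ℝ → ℝ) (hp : ∀ x, p x = (Real.sqrt (2 * π * τ))⁻¹ * Real.exp (-x ^ 2 / (2 * τ)))
    (k : ℝ → ℝ → ℝ)
    (hk : ∀ x y, k x y = (Real.sqrt (2 * π * ε))⁻¹ * Real.exp (-(x - y) ^ 2 / (2 * ε)))
    (pe : ℝ → ℝ) (hpe : ∀ x, pe x = ∫ y, k x y * p y) :
    ∀ x, (∫ y, k x y * (y ^ 2 - c) * p y) / pe x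
      = (τ / (τ + ε)) ^ 2 * (x ^ 2 - c) := by
  intro x
  set a : ℝ := (τ + ε) / (2 * τ * ε) with ha_def
  have ha : 0 < a := by positivity
  set m : ℝ := τ * x / (τ + ε) with hm_def
  set A : ℝ := (Real.sqrt (2 * π * ε) * Real.sqrt (2 * π * τ))⁻¹
    * Real.exp (-x ^ 2 / (2 * (τ + ε))) with hA_def
  have hτε : (0:ℝ) < τ + ε := by linarith
  have hA_pos : 0 < A := by
    apply mul_pos
    · rw [inv_pos]
      apply mul_pos <;> apply Real.sqrt_pos.mpr <;> positivity
    · exact Real.exp_pos _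
  have key : ∀ y : ℝ, k x y * p y = A * Real.exp (-a * (y - m) ^ 2) := by
    intro y
    rw [hk, hp, hA_def]
    have hexp : Real.exp (-(x - y) ^ 2 / (2 * ε)) * Real.exp (-y ^ 2 / (2 * τ))
        = Real.exp (-x ^ 2 / (2 * (τ + ε))) * Real.exp (-a * (y - m) ^ 2) := by
      rw [← Real.exp_add, ← Real.exp_add]
      congr 1
      rw [ha_def, hm_def]
      field_simp
      ring
    calc (Real.sqrt (2 * π * ε))⁻¹ * Real.exp (-(x - y) ^ 2 / (2 * ε))
          * ((Real.sqrt (2 * π * τ))⁻¹ * Real.exp (-y ^ 2 / (2 * τ)))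
        = (Real.sqrt (2 * π * ε) * Real.sqrt (2 * π * τ))⁻¹
          * (Real.exp (-(x - y) ^ 2 / (2 * ε)) * Real.exp (-y ^ 2 / (2 * τ))) := by
          rw [mul_inv]; ring
      _ = _ := by rw [hexp]; ring
  have hnum : (∫ y, k x y * (y ^ 2 - c) * p y)
      = A * ((m ^ 2 + 1 / (2 * a) - c) * Real.sqrt (π / a)) := by
    rw [← gauss_shift2 m c ha, ← integral_const_mul]
    congr 1; funext y
    have := key y
    calc k x y * (y ^ 2 - c) * p y = (y ^ 2 - c) * (k x y * p y) := by ring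
      _ = (y ^ 2 - c) * (A * Real.exp (-a * (y - m) ^ 2)) := by rw [this]
      _ = A * ((y ^ 2 - c) * Real.exp (-a * (y - m) ^ 2)) := by ring
  have hden : pe x = A * Real.sqrt (π / a) := by
    rw [hpe, ← gauss_shift0 m ha, ← integral_const_mul]
    congr 1; funext y; exact key y
  have hs_pos : 0 < Real.sqrt (π / a) := Real.sqrt_pos.mpr (by positivity)
  rw [hnum, hden]
  have hratio : A * ((m ^ 2 + 1 / (2 * a) - c) * Real.sqrt (π / a)) / (A * Real.sqrt (π / a))
      = m ^ 2 + 1 / (2 * a) - c := by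
    rw [mul_div_mul_left _ _ hA_pos.ne', mul_div_assoc, div_self hs_pos.ne', mul_one]
  rw [hratio]
  rw [hm_def, ha_def, hc]
  have h2τε : (0:ℝ) < 2 * τ + ε := by linarith
  field_simp
  ring
end
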